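/- Let A be an n×n complex matrix and B an n×m complex matrix. The condition "for all nonzero λ ∈ ℂ, rank [λI − A, B] = n" holds if and only if rank [B, AB, ..., A^{n−1}B] = rank [B, AB, ..., A^{n−1}B, A^n]. -/

import Mathlib

open Matrix

/-- Controllability-type matrix `[B, AB, ..., A^{N-1}B]` indexed by `Fin N × Fin m`. -/
noncomputable def ctrbMatrix {n m : ℕ} (A : Matrix (Fin n) (Fin n) ℂ)
    (B : Matrix (Fin n) (Fin m) ℂ) (N : ℕ) : Matrix (Fin n) (Fin N × Fin m) ℂ :=
  fun i p => (A ^ (p.1 : ℕ) * B) i p.2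

open Module Polynomial

section Aux

variable {n : ℕ} {p q : Type*} [Fintype p] [Fintype q]

lemma aux_range_fromColumns (M : Matrix (Fin n) p ℂ) (N : Matrix (Fin n) q ℂ) :
    LinearMap.range (fromCols M N).mulVecLin
      = LinearMap.range M.mulVecLin ⊔ LinearMap.range N.mulVecLin := by
  apply le_antisymm
  · rintro x ⟨v, rfl⟩
    have hv : v = Sum.elim (v ∘ Sum.inl) (v ∘ Sum.inr) := by ext (i | i) <;> rfl
    have : (fromCols M N).mulVecLin v
        = M.mulVecLin (v ∘ Sum.inl) + N.mulVecLin (v ∘ Sum.inr) := by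
      rw [Matrix.mulVecLin_apply, hv, fromCols_mulVec_sumElim]; rfl
    rw [this]
    exact Submodule.add_mem_sup (LinearMap.mem_range_self _ _) (LinearMap.mem_range_self _ _)
  · rw [sup_le_iff]
    constructor
    · rintro x ⟨v, rfl⟩
      exact ⟨Sum.elim v 0, by simp [Matrix.mulVecLin_apply]⟩
    · rintro x ⟨v, rfl⟩
      exact ⟨Sum.elim 0 v, by simp [Matrix.mulVecLin_apply]⟩

lemma aux_rank_eq_card_iff (M : Matrix (Fin n) p ℂ) :
    M.rank = n ↔ ∀ v : Fin n → ℂ, Mᵀ *ᵥ v = 0 → v = 0 := by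
  rw [← Matrix.rank_transpose]
  have h := LinearMap.finrank_range_add_finrank_ker Mᵀ.mulVecLin
  have hfin : finrank ℂ (Fin n → ℂ) = n := by simp
  rw [hfin] at h
  unfold Matrix.rank
  constructor
  · intro hr
    have hker : finrank ℂ (LinearMap.ker Mᵀ.mulVecLin) = 0 := by omega
    have : LinearMap.ker Mᵀ.mulVecLin = ⊥ := Submodule.finrank_eq_zero.mp hker
    intro v hv
    have : v ∈ LinearMap.ker Mᵀ.mulVecLin := by
      rw [LinearMap.mem_ker, Matrix.mulVecLin_apply]; exact hv
    rw [‹LinearMap.ker Mᵀ.mulVecLin = ⊥›] at this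
    simpa using this
  · intro hv
    have : LinearMap.ker Mᵀ.mulVecLin = ⊥ := by
      rw [LinearMap.ker_eq_bot']
      intro v h0
      refine hv v ?_
      rw [Matrix.mulVecLin_apply] at h0; exact h0
    rw [this] at h
    simpa using h

lemma aux_ker_of_range_le {M : Matrix (Fin n) p ℂ} {N : Matrix (Fin n) q ℂ}
    (h : LinearMap.range N.mulVecLin ≤ LinearMap.range M.mulVecLin)
    (v : Fin n → ℂ) (hv : Mᵀ *ᵥ v = 0) : Nᵀ *ᵥ v = 0 := by
  classical
  funext j
  obtain ⟨u, hu⟩ := h (LinearMap.mem_range_self N.mulVecLin (Pi.single j 1))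
  have hcol : M *ᵥ u = Nᵀ j := by
    have h' : M *ᵥ u = N.col j := by
      simpa [Matrix.mulVecLin_apply, Matrix.mulVec_single_one] using congrArg id hu
    exact h'
  have : (Nᵀ *ᵥ v) j = v ⬝ᵥ (M *ᵥ u) := by
    rw [hcol]
    simp [Matrix.mulVec, dotProduct, mul_comm]
  rw [Pi.zero_apply, this, Matrix.dotProduct_mulVec, ← Matrix.mulVec_transpose, hv,
    zero_dotProduct]

lemma aux_range_le_of_ker {M : Matrix (Fin n) p ℂ} {N : Matrix (Fin n) q ℂ}
    (h : ∀ v : Fin n → ℂ, Mᵀ *ᵥ v = 0 → Nᵀ *ᵥ v = 0) :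
    LinearMap.range N.mulVecLin ≤ LinearMap.range M.mulVecLin := by
  have hker : LinearMap.ker (fromCols M N)ᵀ.mulVecLin = LinearMap.ker Mᵀ.mulVecLin := by
    ext v
    simp only [LinearMap.mem_ker, Matrix.mulVecLin_apply, transpose_fromCols,
      fromRows_mulVec]
    constructor
    · intro hv
      funext i
      exact congrFun hv (Sum.inl i)
    · intro hv
      have hN := h v hv
      funext i
      cases i with
      | inl i => exact congrFun hv i
      | inr i => exact congrFun hN i
  have e1 := LinearMap.finrank_range_add_finrank_ker (fromCols M N)ᵀ.mulVecLin
  have e2 := LinearMap.finrank_range_add_finrank_ker Mᵀ.mulVecLin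
  rw [hker] at e1
  have hrank : (fromCols M N).rank = M.rank := by
    rw [← Matrix.rank_transpose, ← Matrix.rank_transpose M]
    unfold Matrix.rank
    omega
  have hle : LinearMap.range M.mulVecLin ≤ LinearMap.range (fromCols M N).mulVecLin := by
    rw [aux_range_fromColumns]; exact le_sup_left
  have heq : LinearMap.range M.mulVecLin = LinearMap.range (fromCols M N).mulVecLin :=
    Submodule.eq_of_le_of_finrank_le hle (le_of_eq hrank)
  rw [aux_range_fromColumns] at heq
  rw [heq]
  exact le_sup_right

lemma aux_sum_mulVec {ι : Type*} (s : Finset ι) (f : ι → Matrix (Fin n) p ℂ)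
    (v : p → ℂ) : (∑ i ∈ s, f i) *ᵥ v = ∑ i ∈ s, f i *ᵥ v := by
  classical
  induction s using Finset.induction_on with
  | empty => simp
  | insert a s ha ih =>
    rw [Finset.sum_insert ha, Finset.sum_insert ha, Matrix.add_mulVec, ih]

lemma aux_cayley (A : Matrix (Fin n) (Fin n) ℂ) :
    A ^ n = ∑ k ∈ Finset.range n, (-(A.charpoly.coeff k)) • A ^ k := by
  have h := A.aeval_self_charpoly
  rw [Polynomial.aeval_eq_sum_range] at h
  have hdeg : A.charpoly.natDegree = n := by
    rw [A.charpoly_natDegree_eq_dim, Fintype.card_fin]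
  have hc : A.charpoly.coeff n = 1 := by
    have := A.charpoly_monic.coeff_natDegree
    rwa [hdeg] at this
  rw [hdeg, Finset.sum_range_succ, hc, one_smul] at h
  have h2 : A ^ n = -∑ k ∈ Finset.range n, A.charpoly.coeff k • A ^ k :=
    eq_neg_of_add_eq_zero_right h
  rw [h2, ← Finset.sum_neg_distrib]
  exact Finset.sum_congr rfl fun k _ => (neg_smul _ _).symm

lemma aux_mulVecLin_pow (M : Matrix (Fin n) (Fin n) ℂ) (k : ℕ) (v : Fin n → ℂ) :
    ((M.mulVecLin) ^ k) v = (M ^ k) *ᵥ v := by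
  induction k with
  | zero => simp
  | succ k ih =>
    rw [pow_succ', pow_succ']
    simp only [Module.End.mul_apply, ih, Matrix.mulVecLin_apply, Matrix.mulVec_mulVec]

lemma aux_exists_eigenvalue {W : Type*} [AddCommGroup W] [Module ℂ W] [FiniteDimensional ℂ W]
    (g : Module.End ℂ W) (h : ¬ IsNilpotent g) :
    ∃ μ : ℂ, μ ≠ 0 ∧ g.HasEigenvalue μ := by
  by_contra hc
  push_neg at hc
  apply h
  set P := minpoly ℂ g with hP
  have hmon : P.Monic := minpoly.monic (Algebra.IsIntegral.isIntegral (R := ℂ) g)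
  have hs : P.Splits := IsAlgClosed.splits P
  have hprod : P = (P.roots.map fun a => X - C a).prod :=
    hs.eq_prod_roots_of_monic hmon
  have hroots : ∀ μ ∈ P.roots, μ = (0 : ℂ) := by
    intro μ hμ
    by_contra h0
    exact hc μ h0 (Module.End.hasEigenvalue_iff_isRoot.mpr (Polynomial.isRoot_of_mem_roots hμ))
  have hX : P = X ^ Multiset.card P.roots := by
    have hmc : P.roots.map (fun a => X - C a) = P.roots.map (fun _ => (X : ℂ[X])) :=
      Multiset.map_congr rfl fun a ha => by rw [hroots a ha, map_zero, sub_zero]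
    conv_lhs => rw [hprod, hmc, Multiset.map_const', Multiset.prod_replicate]
  refine ⟨Multiset.card P.roots, ?_⟩
  have := minpoly.aeval ℂ g
  rw [← hP, hX, map_pow, aeval_X] at this
  exact this

end Aux

theorem stmt2 {n m : ℕ} (A : Matrix (Fin n) (Fin n) ℂ) (B : Matrix (Fin n) (Fin m) ℂ) :
    (∀ lam : ℂ, lam ≠ 0 →
      (Matrix.fromCols (lam • (1 : Matrix (Fin n) (Fin n) ℂ) - A) B).rank = n) ↔
    (ctrbMatrix A B n).rank = (Matrix.fromCols (ctrbMatrix A B n) (A ^ n)).rank := by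
  classical
  set C := ctrbMatrix A B n with hC
  set V := LinearMap.range C.mulVecLin with hV
  set R := LinearMap.range (A ^ n).mulVecLin with hR
  -- key: the (k,j) component of `Cᵀ *ᵥ v`
  have hcomp : ∀ (v : Fin n → ℂ) (k : Fin n) (j : Fin m),
      (Cᵀ *ᵥ v) (k, j) = ((A ^ (k : ℕ) * B)ᵀ *ᵥ v) j := by
    intro v k j
    simp [Matrix.mulVec, dotProduct, hC, ctrbMatrix]
  have hmemW : ∀ v : Fin n → ℂ, Cᵀ *ᵥ v = 0 ↔
      ∀ k : Fin n, (A ^ (k : ℕ) * B)ᵀ *ᵥ v = 0 := by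
    intro v
    constructor
    · intro hv k
      funext j
      rw [← hcomp v k j, hv]; rfl
    · intro hv
      funext kj
      rw [hcomp v kj.1 kj.2, hv kj.1]; rfl
  have hRHS : (C.rank = (fromCols C (A ^ n)).rank) ↔ R ≤ V := by
    unfold Matrix.rank
    rw [aux_range_fromColumns, ← hV, ← hR]
    constructor
    · intro h
      have hle : V ≤ V ⊔ R := le_sup_left
      have : V = V ⊔ R := Submodule.eq_of_le_of_finrank_le hle (le_of_eq h.symm)
      rw [this]
      exact le_sup_right
    · intro h
      rw [sup_eq_left.mpr h]
  rw [hRHS]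
  constructor
  · -- PBH at all nonzero λ implies R ≤ V
    intro hPBH
    apply aux_range_le_of_ker
    intro v hv
    -- W := ker Cᵀ
    set W := LinearMap.ker Cᵀ.mulVecLin with hW
    have hmemW' : ∀ w : Fin n → ℂ, w ∈ W ↔ ∀ k : Fin n, (A ^ (k : ℕ) * B)ᵀ *ᵥ w = 0 := by
      intro w
      rw [hW, LinearMap.mem_ker, Matrix.mulVecLin_apply, hmemW]
    have hInv : ∀ w ∈ W, Aᵀ.mulVecLin w ∈ W := by
      intro w hw
      rw [hmemW'] at hw ⊢
      intro k
      have hstep : (A ^ (k : ℕ) * B)ᵀ *ᵥ (Aᵀ.mulVecLin w) = (A ^ ((k : ℕ) + 1) * B)ᵀ *ᵥ w := by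
        rw [Matrix.mulVecLin_apply, Matrix.mulVec_mulVec, ← Matrix.transpose_mul,
          ← Matrix.mul_assoc, (pow_succ' A (k : ℕ)).symm]
      rw [hstep]
      rcases lt_or_eq_of_le (Nat.succ_le_of_lt k.2) with hk | hk
      · exact hw ⟨(k : ℕ) + 1, hk⟩
      · have hk' : (k : ℕ) + 1 = n := hk
        rw [hk', aux_cayley A]
        rw [Matrix.sum_mul]
        simp only [Matrix.smul_mul]
        rw [Matrix.transpose_sum]
        simp only [Matrix.transpose_smul]
        rw [aux_sum_mulVec]
        refine Finset.sum_eq_zero fun i hi => ?_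
        rw [Matrix.smul_mulVec, hw ⟨i, Finset.mem_range.mp hi⟩, smul_zero]
    set g : Module.End ℂ W := Aᵀ.mulVecLin.restrict hInv with hg
    have hnil : IsNilpotent g := by
      by_contra hnilc
      obtain ⟨μ, hμ0, hμ⟩ := aux_exists_eigenvalue g hnilc
      obtain ⟨x, hx⟩ := hμ.exists_hasEigenvector
      have hx0 : (x : Fin n → ℂ) ≠ 0 := fun h0 => hx.2 (Subtype.ext h0)
      have hAx : Aᵀ *ᵥ (x : Fin n → ℂ) = μ • (x : Fin n → ℂ) := by
        have h1 := congrArg (Subtype.val) hx.apply_eq_smul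
        simp only [hg, LinearMap.restrict_coe_apply, Matrix.mulVecLin_apply,
          SetLike.val_smul] at h1
        exact h1
      have hn : 0 < n := by
        rcases Nat.eq_zero_or_pos n with h0 | h0
        · exfalso; apply hx0; subst h0; funext i; exact absurd i.2 (Nat.not_lt_zero _)
        · exact h0
      have hBx : Bᵀ *ᵥ (x : Fin n → ℂ) = 0 := by
        have := (hmemW' (x : Fin n → ℂ)).mp x.2 ⟨0, hn⟩
        simpa using this
      have hrank := hPBH μ hμ0
      rw [aux_rank_eq_card_iff] at hrank
      apply hx0
      apply hrank
      rw [transpose_fromCols, fromRows_mulVec]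
      have hX : (μ • (1 : Matrix (Fin n) (Fin n) ℂ) - A)ᵀ *ᵥ (x : Fin n → ℂ) = 0 := by
        rw [Matrix.transpose_sub, Matrix.transpose_smul, Matrix.transpose_one, Matrix.sub_mulVec,
          Matrix.smul_mulVec, Matrix.one_mulVec, hAx, sub_self]
      rw [hX, hBx]
      funext i
      cases i with
      | inl i => rfl
      | inr i => rfl
    -- from nilpotency, g ^ n = 0
    have hgn : g ^ n = 0 := by
      obtain ⟨d, hd⟩ : ∃ d, d ≤ n ∧ g ^ d = 0 := by
        refine ⟨finrank ℂ W, ?_, ?_⟩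
        · have := Submodule.finrank_le W
          simpa using this
        · have hch := (LinearMap.isNilpotent_iff_charpoly g).mp hnil
          have := LinearMap.aeval_self_charpoly g
          rwa [hch, map_pow, aeval_X] at this
      obtain ⟨hdn, hd0⟩ := hd
      ext x
      have hx : (g ^ n) x = (g ^ (n - d)) ((g ^ d) x) := by
        rw [← Module.End.mul_apply, ← pow_add, Nat.sub_add_cancel hdn]
      rw [hx, hd0]
      simp
    -- conclude
    have hvW : v ∈ W := by rw [hW, LinearMap.mem_ker, Matrix.mulVecLin_apply]; exact hv
    have hval : (A ^ n)ᵀ *ᵥ v = ((g ^ n) ⟨v, hvW⟩ : Fin n → ℂ) := by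
      rw [hg, Module.End.pow_restrict, LinearMap.restrict_coe_apply, aux_mulVecLin_pow,
        Matrix.transpose_pow]
    rw [hval, hgn]
    simp
  · -- R ≤ V implies PBH at all nonzero λ
    intro hRV lam hlam
    rw [aux_rank_eq_card_iff]
    intro v hv
    rw [transpose_fromCols, fromRows_mulVec] at hv
    have hXv : (lam • (1 : Matrix (Fin n) (Fin n) ℂ) - A)ᵀ *ᵥ v = 0 := by
      funext i; exact congrFun hv (Sum.inl i)
    have hBv : Bᵀ *ᵥ v = 0 := by
      funext i; exact congrFun hv (Sum.inr i)
    have hAv : Aᵀ *ᵥ v = lam • v := by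
      rw [Matrix.transpose_sub, Matrix.transpose_smul, Matrix.transpose_one, Matrix.sub_mulVec,
        Matrix.smul_mulVec, Matrix.one_mulVec] at hXv
      have := sub_eq_zero.mp hXv
      exact this.symm
    have hpow : ∀ k : ℕ, (Aᵀ) ^ k *ᵥ v = (lam ^ k) • v := by
      intro k
      induction k with
      | zero => simp
      | succ k ih =>
        rw [pow_succ', ← Matrix.mulVec_mulVec, ih, Matrix.mulVec_smul, hAv, smul_smul,
          ← pow_succ]
    have hCv : Cᵀ *ᵥ v = 0 := by
      rw [hmemW]
      intro k
      rw [Matrix.transpose_mul, ← Matrix.mulVec_mulVec, Matrix.transpose_pow, hpow,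
        Matrix.mulVec_smul, hBv, smul_zero]
    have hAn : (A ^ n)ᵀ *ᵥ v = 0 := aux_ker_of_range_le hRV v hCv
    rw [Matrix.transpose_pow, hpow n] at hAn
    have : lam ^ n ≠ 0 := pow_ne_zero n hlam
    exact (smul_eq_zero.mp hAn).resolve_left this
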